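/- (Marshall–Moser lemma) There exists a constant C > 0 such that: if ψ : [0,∞) → ℝ is measurable with ∫_0^∞ ψ(y)² dy ≤ 1, and F(t) = t − (∫_0^t ψ(y) dy)², then ∫_0^∞ e^{−F(t)} dt ≤ C. -/

import Mathlib

open MeasureTheory

/-- Optimized AM-GM: if `X ≤ (c*Δ + u/c)/2` for all `c > 0`, then `X ≤ √(u*Δ)`. -/
lemma cs_aux {X u Δ : ℝ} (hu : 0 ≤ u) (hΔ : 0 ≤ Δ)
    (h : ∀ c : ℝ, 0 < c → X ≤ (c * Δ + u / c) / 2) : X ≤ Real.sqrt (u * Δ) := by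
  rcases le_or_gt X 0 with hX | hX
  · exact hX.trans (Real.sqrt_nonneg _)
  rcases eq_or_lt_of_le hΔ with hΔ0 | hΔ0
  · exfalso
    rcases eq_or_lt_of_le hu with hu0 | hu0
    · have := h 1 one_pos; rw [← hΔ0, ← hu0] at this; norm_num at this; linarith
    · have h2 := h (u / X) (by positivity)
      have e : u / X * Δ + u / (u / X) = X := by rw [← hΔ0]; field_simp; ring
      rw [e] at h2; linarith
  rcases eq_or_lt_of_le hu with hu0 | hu0
  · exfalso
    have h2 := h (X / Δ) (by positivity)
    have e : X / Δ * Δ + u / (X / Δ) = X := by rw [← hu0]; field_simp; ring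
    rw [e] at h2; linarith
  · have hc : (0:ℝ) < Real.sqrt u / Real.sqrt Δ := by positivity
    have h2 := h _ hc
    have hsu : Real.sqrt u ^ 2 = u := Real.sq_sqrt hu
    have hsΔ : Real.sqrt Δ ^ 2 = Δ := Real.sq_sqrt hΔ
    have hsu0 : (0:ℝ) < Real.sqrt u := Real.sqrt_pos.2 hu0
    have hsΔ0 : (0:ℝ) < Real.sqrt Δ := Real.sqrt_pos.2 hΔ0
    have e : Real.sqrt u / Real.sqrt Δ * Δ + u / (Real.sqrt u / Real.sqrt Δ)
        = 2 * (Real.sqrt u * Real.sqrt Δ) := by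
      field_simp
      nlinarith [hsu, hsΔ]
    rw [e] at h2
    rw [Real.sqrt_mul hu]
    linarith

/-- Cauchy–Schwarz for interval integrals. -/
lemma cs_interval {φ : ℝ → ℝ}
    (hint : ∀ a b : ℝ, IntervalIntegrable φ volume a b)
    (hint2 : ∀ a b : ℝ, IntervalIntegrable (fun y => φ y ^ 2) volume a b)
    {s t : ℝ} (hst : s ≤ t) :
    |∫ y in s..t, φ y| ≤ Real.sqrt ((t - s) * ∫ y in s..t, φ y ^ 2) := by
  apply cs_aux (by linarith) (intervalIntegral.integral_nonneg hst (fun y _ => sq_nonneg _))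
  intro c hc
  have h1 : |∫ y in s..t, φ y| ≤ ∫ y in s..t, |φ y| :=
    intervalIntegral.abs_integral_le_integral_abs hst
  have h2 : ∫ y in s..t, |φ y| ≤ ∫ y in s..t, (c * φ y ^ 2 + 1 / c) / 2 := by
    apply intervalIntegral.integral_mono_on hst ((hint s t).abs)
    · exact (((hint2 s t).const_mul c).add (intervalIntegrable_const)).div_const 2
    · intro y _
      have := sq_nonneg (c * |φ y| - 1)
      have hy : |φ y| ^ 2 = φ y ^ 2 := sq_abs _
      have key : c * φ y ^ 2 + 1 / c - 2 * |φ y| = (c * |φ y| - 1) ^ 2 / c := by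
        have hcc : c * c⁻¹ = 1 := mul_inv_cancel₀ hc.ne'
        rw [eq_div_iff hc.ne']
        linear_combination -c^2 * hy + hcc
      have h0 : (0:ℝ) ≤ (c * |φ y| - 1) ^ 2 / c := div_nonneg this hc.le
      linarith
  have h3 : ∫ y in s..t, (c * φ y ^ 2 + 1 / c) / 2
      = (c * (∫ y in s..t, φ y ^ 2) + (t - s) / c) / 2 := by
    rw [intervalIntegral.integral_div, intervalIntegral.integral_add
        ((hint2 s t).const_mul c) intervalIntegrable_const,
      intervalIntegral.integral_const_mul, intervalIntegral.integral_const]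
    rw [smul_eq_mul, mul_one_div]
  linarith [h3 ▸ h2]

lemma amgm_aux {u lam : ℝ} (hu : 0 ≤ u) (hlam : 0 ≤ lam) :
    2 * (Real.sqrt u * Real.sqrt lam) ≤ u/4 + 4*lam := by
  nlinarith [sq_nonneg (Real.sqrt u/2 - 2*Real.sqrt lam), Real.sq_sqrt hu,
    Real.sq_sqrt hlam, Real.sqrt_nonneg u, Real.sqrt_nonneg lam]

theorem marshall_moser :
    ∃ C > (0:ℝ), ∀ ψ : ℝ → ℝ, Measurable ψ →
      (∫⁻ y in Set.Ioi (0:ℝ), ENNReal.ofReal ((ψ y) ^ 2)) ≤ 1 →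
      (∫⁻ t in Set.Ioi (0:ℝ),
          ENNReal.ofReal (Real.exp (-(t - (∫ y in Set.Ioo (0:ℝ) t, ψ y) ^ 2)))) ≤
        ENNReal.ofReal C := by
  refine ⟨92, by norm_num, ?_⟩
  intro ψ hψ hψ2
  set φ : ℝ → ℝ := fun y => if 0 < y then ψ y else 0 with hφdef
  have hφm : Measurable φ := Measurable.ite measurableSet_Ioi hψ measurable_const
  -- the L² bound for φ over all of ℝ
  have hφsq_lint : ∫⁻ y, ENNReal.ofReal (φ y ^ 2) ≤ 1 := by
    have e : ∀ y, ENNReal.ofReal (φ y ^ 2)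
        = Set.indicator (Set.Ioi 0) (fun y => ENNReal.ofReal (ψ y ^ 2)) y := by
      intro y
      by_cases hy : (0:ℝ) < y
      · simp [hφdef, hy, Set.indicator_of_mem (Set.mem_Ioi.2 hy)]
      · simp [hφdef, hy, Set.indicator_of_notMem (fun h => hy (Set.mem_Ioi.1 h))]
    rw [lintegral_congr e, lintegral_indicator measurableSet_Ioi _]
    exact hψ2
  have hφsq_int : Integrable (fun y => φ y ^ 2) := by
    refine ⟨(hφm.pow_const 2).aestronglyMeasurable, ?_⟩
    rw [HasFiniteIntegral]
    calc ∫⁻ y, (‖φ y ^ 2‖₊ : ENNReal) = ∫⁻ y, ENNReal.ofReal (φ y ^ 2) := by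
          apply lintegral_congr; intro y; exact Real.enorm_eq_ofReal (sq_nonneg _)
      _ ≤ 1 := hφsq_lint
      _ < ⊤ := by norm_num
  have hint2 : ∀ a b : ℝ, IntervalIntegrable (fun y => φ y ^ 2) volume a b :=
    fun a b => hφsq_int.intervalIntegrable
  have hint1 : ∀ a b : ℝ, IntervalIntegrable φ volume a b := by
    have hIoc : ∀ a b : ℝ, IntegrableOn φ (Set.Ioc a b) := by
      intro a b
      have hb : IntegrableOn (fun y => φ y ^ 2 + 1) (Set.Ioc a b) :=
        (hφsq_int.restrict (s := Set.Ioc a b)).add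
          (integrableOn_const (C := (1:ℝ)) measure_Ioc_lt_top.ne)
      apply Integrable.mono hb (hφm.aestronglyMeasurable.restrict)
      filter_upwards with y
      rw [Real.norm_eq_abs, Real.norm_eq_abs]
      have h1 : |φ y| ≤ φ y ^ 2 + 1 := by nlinarith [sq_nonneg (|φ y| - 1), sq_abs (φ y)]
      have h2 : (0:ℝ) ≤ φ y ^ 2 + 1 := by positivity
      rw [abs_of_nonneg h2]
      exact h1
    exact fun a b => ⟨hIoc a b, hIoc b a⟩
  set g : ℝ → ℝ := fun t => ∫ y in (0:ℝ)..t, φ y with hgdef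
  set a : ℝ → ℝ := fun t => ∫ y in (0:ℝ)..t, φ y ^ 2 with hadef
  set F : ℝ → ℝ := fun t => t - g t ^ 2 with hFdef
  have hg_cont : Continuous g := intervalIntegral.continuous_primitive hint1 0
  have ha_sub : ∀ s t : ℝ, a t - a s = ∫ y in s..t, φ y ^ 2 := by
    intro s t
    show (∫ y in (0:ℝ)..t, φ y ^ 2) - (∫ y in (0:ℝ)..s, φ y ^ 2) = _
    exact intervalIntegral.integral_interval_sub_left (hint2 0 t) (hint2 0 s)
  have hg_sub : ∀ s t : ℝ, g t - g s = ∫ y in s..t, φ y := by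
    intro s t
    show (∫ y in (0:ℝ)..t, φ y) - (∫ y in (0:ℝ)..s, φ y) = _
    exact intervalIntegral.integral_interval_sub_left (hint1 0 t) (hint1 0 s)
  have ha_mono : ∀ s t : ℝ, s ≤ t → a s ≤ a t := by
    intro s t hst
    have h0 : 0 ≤ ∫ y in s..t, φ y ^ 2 :=
      intervalIntegral.integral_nonneg hst (fun y _ => sq_nonneg _)
    have := ha_sub s t
    linarith
  have ha0 : a 0 = 0 := intervalIntegral.integral_same
  have hg0 : g 0 = 0 := intervalIntegral.integral_same
  have ha_nonneg : ∀ t : ℝ, 0 ≤ t → 0 ≤ a t := by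
    intro t ht; have := ha_mono 0 t ht; rw [ha0] at this; exact this
  have ha_le_one : ∀ t : ℝ, 0 ≤ t → a t ≤ 1 := by
    intro t ht
    have hnn : 0 ≤ᵐ[volume.restrict (Set.Ioc 0 t)] fun y => φ y ^ 2 := by
      filter_upwards with y; exact sq_nonneg _
    have e1 : a t = ∫ y in Set.Ioc 0 t, φ y ^ 2 := by
      rw [hadef]; exact intervalIntegral.integral_of_le ht
    have e2 : ENNReal.ofReal (a t) = ∫⁻ y in Set.Ioc 0 t, ENNReal.ofReal (φ y ^ 2) := by
      rw [e1]; exact ofReal_integral_eq_lintegral_ofReal hφsq_int.restrict hnn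
    have e3 : (∫⁻ y in Set.Ioc 0 t, ENNReal.ofReal (φ y ^ 2)) ≤ 1 :=
      le_trans (setLIntegral_le_lintegral _ _) hφsq_lint
    rw [← ENNReal.ofReal_le_one, e2]
    exact e3
  have hCS : ∀ s t : ℝ, s ≤ t → |g t - g s| ≤ Real.sqrt ((t - s) * (a t - a s)) := by
    intro s t hst
    rw [hg_sub s t, ha_sub s t]
    exact cs_interval hint1 hint2 hst
  have hgsq : ∀ t : ℝ, 0 ≤ t → g t ^ 2 ≤ t * a t := by
    intro t ht
    have h := hCS 0 t ht
    rw [hg0, ha0, sub_zero, sub_zero, sub_zero] at h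
    have h2 : |g t| ^ 2 ≤ Real.sqrt (t * a t) ^ 2 :=
      pow_le_pow_left₀ (abs_nonneg _) h 2
    rw [sq_abs, Real.sq_sqrt (mul_nonneg ht (ha_nonneg t ht))] at h2
    exact h2
  have hF_nonneg : ∀ t : ℝ, 0 ≤ t → 0 ≤ F t := by
    intro t ht
    have h1 := hgsq t ht
    have h2 := ha_le_one t ht
    rw [hFdef]
    simp only
    nlinarith
  -- key lemma
  have hkey : ∀ lam s t : ℝ, 0 < lam → 2*lam ≤ s → s ≤ t → F s < lam → F t < lam →
      t - s < 20*lam := by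
    intro lam s t hlam hs hst hFs hFt
    have hs0 : 0 < s := lt_of_lt_of_le (by linarith) hs
    have ht0 : 0 < t := lt_of_lt_of_le hs0 hst
    have hu : 0 ≤ t - s := by linarith
    have has1 : a s ≤ 1 := ha_le_one s hs0.le
    have hat1 : a t ≤ 1 := ha_le_one t ht0.le
    have has0 : 0 ≤ a s := ha_nonneg s hs0.le
    have hΔ0 : 0 ≤ a t - a s := by linarith [ha_mono s t hst]
    have hb0 : 0 ≤ 1 - a s := by linarith
    have h1 : |g t| ≤ |g s| + Real.sqrt ((t - s) * (1 - a s)) := by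
      have h1a : |g t| ≤ |g s| + |g t - g s| := by
        calc |g t| = |g s + (g t - g s)| := by ring_nf
          _ ≤ |g s| + |g t - g s| := abs_add_le _ _
      have h1b := hCS s t hst
      have h1c : Real.sqrt ((t-s)*(a t - a s)) ≤ Real.sqrt ((t-s)*(1-a s)) :=
        Real.sqrt_le_sqrt (by nlinarith)
      linarith
    set r := Real.sqrt ((t - s) * (1 - a s)) with hrdef
    have hr0 : 0 ≤ r := Real.sqrt_nonneg _
    have hr2 : r ^ 2 = (t - s) * (1 - a s) := Real.sq_sqrt (mul_nonneg hu hb0)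
    have h2 : g t ^ 2 ≤ (|g s| + r) ^ 2 := by
      rw [← sq_abs (g t)]; exact pow_le_pow_left₀ (abs_nonneg _) h1 2
    have hg2 : g s ^ 2 ≤ s * a s := hgsq s hs0.le
    have hFs0 : 0 ≤ F s := hF_nonneg s hs0.le
    have hFsval : F s = s - g s ^ 2 := rfl
    have hFtval : F t = t - g t ^ 2 := rfl
    have h4 : |g s| * r ≤ Real.sqrt ((t - s) * lam) := by
      have e1 : |g s| * r = Real.sqrt (g s ^ 2 * ((t-s) * (1 - a s))) := by
        rw [Real.sqrt_mul (sq_nonneg _), Real.sqrt_sq_eq_abs]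
      rw [e1]
      apply Real.sqrt_le_sqrt
      have k0 : 0 ≤ (s * a s - g s ^ 2) * (1 - a s) := mul_nonneg (by linarith) hb0
      have k0c : (0:ℝ) ≤ s * (1 - a s) * (1 - a s) :=
        mul_nonneg (mul_nonneg hs0.le hb0) hb0
      have k1 : g s ^ 2 * (1 - a s) < lam := by nlinarith [k0, k0c, hg2, hFs, hFsval]
      calc g s ^ 2 * ((t-s)*(1-a s)) = (t-s) * (g s ^ 2 * (1-a s)) := by ring
        _ ≤ (t-s) * lam := mul_le_mul_of_nonneg_left k1.le hu
    have hsb : s * (1 - a s) ≤ F s := by rw [hFsval]; nlinarith [hg2]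
    have hb_half : 1 - a s ≤ 1/2 := by
      by_contra hcon
      push_neg at hcon
      have h2' : s * (1/2) < s * (1 - a s) := mul_lt_mul_of_pos_left hcon hs0
      linarith
    have h5 : F t ≥ (t - s)/2 - 2 * Real.sqrt ((t-s) * lam) := by
      have hexp : (|g s| + r)^2 = g s ^ 2 + 2 * (abs (g s) * r) + (t-s)*(1-a s) := by
        rw [add_sq, sq_abs, hr2]; ring
      have h6 : F t ≥ F s + (t - s) * (a s) - 2 * (abs (g s) * r) := by
        rw [hFsval, hFtval]
        rw [hexp] at h2
        linarith
      have h7 : (t-s)*(1/2) ≤ (t-s)*(a s) :=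
        mul_le_mul_of_nonneg_left (by linarith) hu
      linarith [h6, h4, hFs0, h7]
    have e7 : Real.sqrt ((t-s) * lam) = Real.sqrt (t-s) * Real.sqrt lam :=
      Real.sqrt_mul hu lam
    have e8 : Real.sqrt (t-s) ^ 2 = t - s := Real.sq_sqrt hu
    have e9 : Real.sqrt lam ^ 2 = lam := Real.sq_sqrt hlam.le
    rw [e7] at h5
    linarith [h5, hFt, amgm_aux hu hlam.le]
  -- measure of sublevel sets
  have hmeas : ∀ lam : ℝ, 0 < lam →
      volume {t : ℝ | 0 < t ∧ F t < lam} ≤ ENNReal.ofReal (23 * lam) := by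
    intro lam hlam
    set S := {t : ℝ | 0 < t ∧ F t < lam} with hSdef
    by_cases hne : (S ∩ Set.Ici (2*lam)).Nonempty
    · set s₀ := sInf (S ∩ Set.Ici (2*lam)) with hs₀
      have hbdd : BddBelow (S ∩ Set.Ici (2*lam)) := ⟨2*lam, fun x hx => hx.2⟩
      have hsub : S ⊆ Set.Ioo 0 (2*lam) ∪ Set.Icc s₀ (s₀ + 21*lam) := by
        intro t ht
        rcases lt_or_ge t (2*lam) with h | h
        · exact Or.inl ⟨ht.1, h⟩
        · refine Or.inr ⟨csInf_le hbdd ⟨ht, h⟩, ?_⟩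
          by_contra hcon
          push_neg at hcon
          obtain ⟨s, hsS, hslt⟩ := (csInf_lt_iff hbdd hne).1
            (show s₀ < s₀ + lam by linarith)
          have hst : s ≤ t := by linarith
          have := hkey lam s t hlam hsS.2 hst hsS.1.2 ht.2
          linarith
      calc volume S ≤ volume (Set.Ioo 0 (2*lam) ∪ Set.Icc s₀ (s₀ + 21*lam)) :=
            measure_mono hsub
        _ ≤ volume (Set.Ioo 0 (2*lam)) + volume (Set.Icc s₀ (s₀+21*lam)) :=
            measure_union_le _ _
        _ = ENNReal.ofReal (2*lam - 0) + ENNReal.ofReal (s₀ + 21*lam - s₀) := by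
            rw [Real.volume_Ioo, Real.volume_Icc]
        _ ≤ ENNReal.ofReal (23 * lam) := by
            rw [← ENNReal.ofReal_add (by linarith) (by linarith)]
            exact ENNReal.ofReal_le_ofReal (by linarith)
    · have hsub : S ⊆ Set.Ioo 0 (2*lam) := by
        intro t ht
        rcases lt_or_ge t (2*lam) with h | h
        · exact ⟨ht.1, h⟩
        · exact absurd ⟨ht, h⟩ (fun hx => hne ⟨t, hx⟩)
      calc volume S ≤ volume (Set.Ioo 0 (2*lam)) := measure_mono hsub
        _ = ENNReal.ofReal (2*lam - 0) := Real.volume_Ioo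
        _ ≤ ENNReal.ofReal (23*lam) := ENNReal.ofReal_le_ofReal (by linarith)
  -- reduce to F
  have hcongr : (∫⁻ t in Set.Ioi (0:ℝ),
      ENNReal.ofReal (Real.exp (-(t - (∫ y in Set.Ioo (0:ℝ) t, ψ y) ^ 2))))
      = ∫⁻ t in Set.Ioi (0:ℝ), ENNReal.ofReal (Real.exp (-(F t))) := by
    apply setLIntegral_congr_fun measurableSet_Ioi
    intro t ht
    have ht0 : (0:ℝ) < t := ht
    have e2 : ∫ y in Set.Ioo (0:ℝ) t, ψ y = ∫ y in Set.Ioo (0:ℝ) t, φ y :=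
      setIntegral_congr_fun measurableSet_Ioo (fun y hy => by
        simp [hφdef, hy.1])
    have e3 : g t = ∫ y in Set.Ioo (0:ℝ) t, φ y := by
      show (∫ y in (0:ℝ)..t, φ y) = _
      rw [intervalIntegral.integral_of_le ht0.le, integral_Ioc_eq_integral_Ioo]
    have hFtval : F t = t - g t ^ 2 := rfl
    beta_reduce
    rw [e2, ← e3, hFtval]
  rw [hcongr]
  -- layer cake
  have hlayer : (∫⁻ t in Set.Ioi (0:ℝ), ENNReal.ofReal (Real.exp (-(F t))))
      = ∫⁻ σ in Set.Ioi (0:ℝ), (volume.restrict (Set.Ioi 0)) {t : ℝ | σ < Real.exp (-(F t))} := by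
    apply lintegral_eq_lintegral_meas_lt
    · filter_upwards with t; positivity
    · exact ((continuous_id.sub (hg_cont.pow 2)).neg.rexp).measurable.aemeasurable
  rw [hlayer]
  calc (∫⁻ σ in Set.Ioi (0:ℝ), (volume.restrict (Set.Ioi 0)) {t : ℝ | σ < Real.exp (-(F t))})
      ≤ ∫⁻ σ in Set.Ioi (0:ℝ),
          (Set.Ioo (0:ℝ) 1).indicator (fun σ => ENNReal.ofReal (46 * σ ^ (-(2⁻¹:ℝ)))) σ := by
        apply lintegral_mono_ae
        rw [ae_restrict_iff' measurableSet_Ioi]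
        filter_upwards with σ hσ
        have hσ0 : (0:ℝ) < σ := hσ
        by_cases hσ1 : 1 ≤ σ
        · have hempty : {t : ℝ | σ < Real.exp (-(F t))} ∩ Set.Ioi 0 = ∅ := by
            apply Set.eq_empty_iff_forall_notMem.2
            rintro t ⟨hlt, ht0⟩
            simp only [Set.mem_setOf_eq] at hlt
            have hF0 : 0 ≤ F t := hF_nonneg t (le_of_lt ht0)
            have hle : Real.exp (-(F t)) ≤ 1 := Real.exp_le_one_iff.2 (by linarith)
            linarith
          rw [Measure.restrict_apply' measurableSet_Ioi, hempty, measure_empty]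
          exact zero_le
        · push_neg at hσ1
          set lam := -Real.log σ with hlamdef
          have hlam0 : 0 < lam := by
            rw [hlamdef]
            simpa using Real.log_neg hσ0 hσ1
          have hsub2 : {t : ℝ | σ < Real.exp (-(F t))} ∩ Set.Ioi 0
              ⊆ {t : ℝ | 0 < t ∧ F t < lam} := by
            rintro t ⟨hlt, ht0⟩
            refine ⟨ht0, ?_⟩
            have hlog := Real.log_lt_log hσ0 hlt
            rw [Real.log_exp] at hlog
            rw [hlamdef]
            linarith
          calc (volume.restrict (Set.Ioi 0)) {t : ℝ | σ < Real.exp (-(F t))}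
              = volume ({t : ℝ | σ < Real.exp (-(F t))} ∩ Set.Ioi 0) :=
                Measure.restrict_apply' measurableSet_Ioi
            _ ≤ volume {t : ℝ | 0 < t ∧ F t < lam} := measure_mono hsub2
            _ ≤ ENNReal.ofReal (23 * lam) := hmeas lam hlam0
            _ ≤ (Set.Ioo (0:ℝ) 1).indicator
                (fun σ => ENNReal.ofReal (46 * σ ^ (-(2⁻¹:ℝ)))) σ := by
                rw [Set.indicator_of_mem (Set.mem_Ioo.2 ⟨hσ0, hσ1⟩)]
                apply ENNReal.ofReal_le_ofReal
                have h1 : Real.log (σ ^ (-(2⁻¹:ℝ))) = -(2⁻¹) * Real.log σ :=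
                  Real.log_rpow hσ0 _
                have h2 : Real.log (σ ^ (-(2⁻¹:ℝ))) ≤ σ ^ (-(2⁻¹:ℝ)) - 1 :=
                  Real.log_le_sub_one_of_pos (Real.rpow_pos_of_pos hσ0 _)
                have h3 : (0:ℝ) < σ ^ (-(2⁻¹:ℝ)) := Real.rpow_pos_of_pos hσ0 _
                rw [hlamdef]
                nlinarith [h1, h2, h3]
    _ = ∫⁻ σ in Set.Ioo (0:ℝ) 1, ENNReal.ofReal (46 * σ ^ (-(2⁻¹:ℝ))) := by
        rw [lintegral_indicator measurableSet_Ioo _, Measure.restrict_restrict measurableSet_Ioo,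
          Set.inter_eq_self_of_subset_left (fun x hx => hx.1)]
    _ ≤ ENNReal.ofReal 92 := by
        have hIoc : IntegrableOn (fun σ : ℝ => σ ^ (-(2⁻¹:ℝ))) (Set.Ioc (0:ℝ) 1) :=
          (intervalIntegral.intervalIntegrable_rpow' (by norm_num)).1
        have hInt : IntegrableOn (fun σ : ℝ => 46 * σ ^ (-(2⁻¹:ℝ))) (Set.Ioo (0:ℝ) 1) :=
          (hIoc.mono_set Set.Ioo_subset_Ioc_self).const_mul 46
        have hnn : 0 ≤ᵐ[volume.restrict (Set.Ioo (0:ℝ) 1)]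
            fun σ : ℝ => 46 * σ ^ (-(2⁻¹:ℝ)) := by
          filter_upwards [ae_restrict_mem measurableSet_Ioo] with σ hσ
          have := Real.rpow_nonneg hσ.1.le (-(2⁻¹:ℝ))
          positivity
        rw [← ofReal_integral_eq_lintegral_ofReal hInt hnn]
        apply ENNReal.ofReal_le_ofReal
        rw [← integral_Ioc_eq_integral_Ioo,
          ← intervalIntegral.integral_of_le (by norm_num : (0:ℝ) ≤ 1),
          intervalIntegral.integral_const_mul,
          integral_rpow (Or.inl (by norm_num))]
        rw [Real.one_rpow, Real.zero_rpow (by norm_num)]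
        norm_num
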